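/- arXiv:1006.3869 — 4 statements merged into one kernel-verified Lean document; each statement's English description precedes it below -/
import Mathlib

section
/- Let M be a finite connected matroid of positive rank and K any field. Then the multivariate Tutte polynomial Ẑ_M(q,v) is irreducible as a polynomial in q over the rational function field K(v). -/
open Polynomial MvPolynomial

namespace ZhatAux



variable {α : Type} [DecidableEq α] {R : Type} [CommRing R]

/-- The exponent finsupp of the squarefree monomial with support `S`. -/
noncomputable def msum (S : Finset α) : α →₀ ℕ := ∑ e ∈ S, Finsupp.single e 1

lemma msum_apply (S : Finset α) (e : α) : msum S e = if e ∈ S then 1 else 0 := by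
  classical
  simp only [msum, Finsupp.finset_sum_apply, Finsupp.single_apply]
  rw [Finset.sum_ite_eq' S e (fun _ => 1)]

lemma msum_inj {S T : Finset α} (h : msum S = msum T) : S = T := by
  ext e
  have := congrArg (fun f => f e) h
  simp only [msum_apply] at this
  by_cases hS : e ∈ S <;> by_cases hT : e ∈ T <;> simp_all

lemma msum_add {S T : Finset α} (h : Disjoint S T) :
    msum S + msum T = msum (S ∪ T) := by
  rw [msum, msum, msum, ← Finset.sum_union h]

lemma msum_le_one (S : Finset α) (e : α) : msum S e ≤ 1 := by
  rw [msum_apply]; split <;> simp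

lemma msum_add_eq_univ {S T : Finset α} [Fintype α]
    (h : msum S + msum T = msum Finset.univ) : T = Sᶜ := by
  ext e
  have := congrArg (fun f => f e) h
  simp only [Finsupp.add_apply, msum_apply, Finset.mem_univ, if_true] at this
  by_cases hS : e ∈ S <;> by_cases hT : e ∈ T <;> simp_all

/-- Coefficient of a squarefree monomial in a sum of squarefree monomials. -/
lemma coeff_sum_msum (c : Finset α → R) (U : Finset (Finset α)) (T : Finset α)
    (hT : T ∈ U) :
    MvPolynomial.coeff (msum T) (∑ S ∈ U, monomial (msum S) (c S)) = c T := by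
  rw [MvPolynomial.coeff_sum]
  rw [Finset.sum_eq_single T]
  · simp [MvPolynomial.coeff_monomial]
  · intro S hS hne
    rw [MvPolynomial.coeff_monomial, if_neg (fun h => hne (msum_inj h))]
  · intro h; exact absurd hT h

lemma coeff_nonsquarefree (c : Finset α → R) (U : Finset (Finset α)) (m : α →₀ ℕ)
    (e : α) (he : 1 < m e) :
    MvPolynomial.coeff m (∑ S ∈ U, monomial (msum S) (c S)) = 0 := by
  rw [MvPolynomial.coeff_sum]
  apply Finset.sum_eq_zero
  intro S hS
  rw [MvPolynomial.coeff_monomial, if_neg]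
  intro h
  rw [← h] at he
  exact absurd (msum_le_one S e) (by omega)

lemma degreeOf_sum_msum_le (c : Finset α → R) (U : Finset (Finset α)) (e : α) :
    degreeOf e (∑ S ∈ U, monomial (msum S) (c S)) ≤ 1 := by
  rw [degreeOf_le_iff]
  intro m hm
  by_contra h
  rw [MvPolynomial.mem_support_iff] at hm
  exact hm (coeff_nonsquarefree c U m e (by omega))



lemma degreeOf_mul_eq_of_domain {α : Type} [DecidableEq α] [Fintype α]
    {R : Type} [CommRing R] [IsDomain R]
    (e : α) {f g : MvPolynomial α R} (hf : f ≠ 0) (hg : g ≠ 0) :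
    degreeOf e (f * g) = degreeOf e f + degreeOf e g := by
  classical
  obtain ⟨n, hn⟩ : ∃ n, Fintype.card α = n + 1 :=
    ⟨Fintype.card α - 1, by have := Fintype.card_pos_iff.mpr ⟨e⟩; omega⟩
  let ι₀ : α ≃ Fin (n + 1) := Fintype.equivFinOfCardEq hn
  let ι : α ≃ Fin (n + 1) := ι₀.trans (Equiv.swap (ι₀ e) 0)
  have hιe : ι e = 0 := by simp [ι]
  have hinj : Function.Injective ι := ι.injective
  have key : ∀ p : MvPolynomial α R,
      degreeOf e p = ((MvPolynomial.finSuccEquiv R n) (rename ι p)).natDegree := by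
    intro p
    rw [natDegree_finSuccEquiv, ← hιe, degreeOf_rename_of_injective hinj]
  have hrf : rename ι f ≠ 0 := fun h => hf ((rename_injective ι hinj).eq_iff.mp (by simpa using h))
  have hrg : rename ι g ≠ 0 := fun h => hg ((rename_injective ι hinj).eq_iff.mp (by simpa using h))
  have hf' : (MvPolynomial.finSuccEquiv R n) (rename ι f) ≠ 0 := by
    simpa using hrf
  have hg' : (MvPolynomial.finSuccEquiv R n) (rename ι g) ≠ 0 := by
    simpa using hrg
  rw [key, key, key, map_mul, map_mul, Polynomial.natDegree_mul hf' hg']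

variable {α : Type} [DecidableEq α] {R : Type} [CommRing R]

lemma msum_support (S : Finset α) : (msum S).support = S := by
  ext e
  rw [Finsupp.mem_support_iff, msum_apply]
  split <;> simp_all

lemma msum_prod {M : Type} [CommMonoid M] (S : Finset α) (f : α → M) :
    (msum S).prod (fun i k => f i ^ k) = ∏ i ∈ S, f i := by
  rw [Finsupp.prod, msum_support]
  apply Finset.prod_congr rfl
  intro i hi
  rw [msum_apply, if_pos hi, pow_one]

/-- `φ_A` fixes polynomials whose variables lie in `A`. -/
lemma aeval_eq_self_of_vars_subset (A : Finset α) {F : MvPolynomial α R}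
    (h : ∀ i ∈ F.vars, i ∈ A) :
    MvPolynomial.aeval (fun e => if e ∈ A then MvPolynomial.X e else 0) F = F := by
  have := hom_congr_vars (R := R) (σ := α)
    (f₁ := (MvPolynomial.aeval (fun e => if e ∈ A then MvPolynomial.X e else (0 : MvPolynomial α R))).toRingHom)
    (f₂ := RingHom.id _) (p₁ := F) (p₂ := F) ?_ ?_ rfl
  · simpa using this
  · ext r; simp [algebraMap_eq]
  · intro i hi _
    simp [if_pos (h i hi)]

/-- `φ_A` collapses polynomials whose variables avoid `A` to their constant term. -/
lemma aeval_eq_constant_of_vars_disjoint (A : Finset α) {G : MvPolynomial α R}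
    (h : ∀ i ∈ G.vars, i ∉ A) :
    MvPolynomial.aeval (fun e => if e ∈ A then MvPolynomial.X e else 0) G
      = MvPolynomial.C (MvPolynomial.coeff 0 G) := by
  rw [show (MvPolynomial.aeval fun e => if e ∈ A then MvPolynomial.X e else (0 : MvPolynomial α R)) G
      = ∑ m ∈ G.support, (MvPolynomial.aeval fun e => if e ∈ A then MvPolynomial.X e else (0 : MvPolynomial α R))
          (monomial m (MvPolynomial.coeff m G)) from by rw [← map_sum, ← G.as_sum]]
  have hterm : ∀ m ∈ G.support, m ≠ 0 →
      MvPolynomial.aeval (fun e => if e ∈ A then MvPolynomial.X e else (0 : MvPolynomial α R))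
        (monomial m (MvPolynomial.coeff m G)) = 0 := by
    intro m hm hm0
    obtain ⟨i, hi⟩ := Finsupp.support_nonempty_iff.mpr hm0
    have hiv : i ∈ G.vars := (mem_vars i).mpr ⟨m, hm, hi⟩
    rw [MvPolynomial.aeval_monomial]
    rw [Finsupp.prod, Finset.prod_eq_zero hi, mul_zero]
    rw [if_neg (h i hiv), zero_pow (Finsupp.mem_support_iff.mp hi)]
  rw [Finset.sum_eq_single (0 : α →₀ ℕ)]
  · rw [MvPolynomial.aeval_monomial]
    simp [algebraMap_eq]
  · intro m hm hm0; exact hterm m hm hm0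
  · intro h0
    rw [MvPolynomial.aeval_monomial]
    rw [MvPolynomial.notMem_support_iff.mp h0]
    simp

/-- `φ_A` applied to a sum of squarefree monomials kills those not supported in `A`. -/
lemma aeval_sum_msum (A : Finset α) (c : Finset α → R) (U : Finset (Finset α)) :
    MvPolynomial.aeval (fun e => if e ∈ A then MvPolynomial.X e else 0)
        (∑ S ∈ U, monomial (msum S) (c S))
      = ∑ S ∈ U, monomial (msum S) (if S ⊆ A then c S else 0) := by
  rw [map_sum]
  apply Finset.sum_congr rfl
  intro S _
  rw [MvPolynomial.aeval_monomial, msum_prod]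
  by_cases hSA : S ⊆ A
  · rw [if_pos hSA, monomial_eq, msum_prod, algebraMap_eq]
    congr 1
    exact Finset.prod_congr rfl (fun i hi => by rw [if_pos (hSA hi)])
  · rw [if_neg hSA]
    obtain ⟨i, hiS, hiA⟩ := Finset.not_subset.mp hSA
    rw [Finset.prod_eq_zero hiS
      (show (if i ∈ A then MvPolynomial.X i else (0 : MvPolynomial α R)) = 0 from if_neg hiA),
      mul_zero, monomial_zero]

/-- Coefficient of the full squarefree monomial in a product of sums of squarefree
monomials supported in `A` resp. `Aᶜ`. -/
lemma coeff_univ_mul [Fintype α] (c d : Finset α → R) (A : Finset α)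
    (hc : ∀ S, ¬ S ⊆ A → c S = 0) (hd : ∀ T, ¬ T ⊆ Aᶜ → d T = 0) :
    MvPolynomial.coeff (msum Finset.univ)
        ((∑ S ∈ (Finset.univ : Finset (Finset α)), monomial (msum S) (c S)) *
          (∑ T ∈ (Finset.univ : Finset (Finset α)), monomial (msum T) (d T)))
      = c A * d Aᶜ := by
  rw [Finset.sum_mul_sum]
  simp only [monomial_mul]
  rw [MvPolynomial.coeff_sum]
  have key : ∀ S T : Finset α, msum S + msum T = msum Finset.univ → T = Sᶜ :=
    fun S T h => msum_add_eq_univ h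
  rw [Finset.sum_eq_single A]
  · rw [MvPolynomial.coeff_sum, Finset.sum_eq_single Aᶜ]
    · rw [MvPolynomial.coeff_monomial, if_pos]
      rw [msum_add (disjoint_compl_right), Finset.union_compl]
    · intro T _ hT
      rw [MvPolynomial.coeff_monomial, if_neg]
      intro h
      exact hT (key A T h)
    · simp
  · intro S _ hSA
    rw [MvPolynomial.coeff_sum]
    apply Finset.sum_eq_zero
    intro T _
    rw [MvPolynomial.coeff_monomial]
    by_cases h : msum S + msum T = msum Finset.univ
    · rw [if_pos h]
      have hT : T = Sᶜ := key S T h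
      by_cases hS : S ⊆ A
      · have : ¬ T ⊆ Aᶜ := by
          rw [hT]
          intro hsub
          exact hSA (Finset.Subset.antisymm hS (by
            intro a ha
            by_contra haS
            exact absurd (hsub (by simpa using haS)) (by simpa using ha)))
        rw [hd T this, mul_zero]
      · rw [hc S hS, zero_mul]
    · rw [if_neg h]
  · simp

variable {α : Type} [DecidableEq α] {R : Type} [CommRing R]

lemma msum_empty : msum (∅ : Finset α) = (0 : α →₀ ℕ) := by simp [msum]

lemma one_le_degreeOf_of_mem_vars {F : MvPolynomial α R} {i : α} (h : i ∈ F.vars) :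
    1 ≤ degreeOf i F := by
  obtain ⟨m, hm, him⟩ := (mem_vars i).mp h
  have h1 : 1 ≤ m i := Nat.one_le_iff_ne_zero.mpr (Finsupp.mem_support_iff.mp him)
  exact le_trans h1 (monomial_le_degreeOf i hm)

/-- If a polynomial has no variables it is a constant. -/
lemma eq_C_of_vars_empty {F : MvPolynomial α R} (h : F.vars = ∅) :
    F = MvPolynomial.C (MvPolynomial.coeff 0 F) := by
  have h1 := aeval_eq_self_of_vars_subset (R := R) (∅ : Finset α)
    (F := F) (by simp [h])
  have h2 := aeval_eq_constant_of_vars_disjoint (R := R) (∅ : Finset α)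
    (G := F) (by simp)
  conv_lhs => rw [← h1, h2]

/-- The main irreducibility lemma, over `K[X]`. -/
lemma irreducible_sum_msum {α : Type} [DecidableEq α] [Fintype α] {K : Type} [Field K]
    (r : Finset α → ℕ) (rk : ℕ) (hrk : 0 < rk)
    (h0 : r ∅ = 0) (hle : ∀ A, r A ≤ rk) (huniv : r Finset.univ = rk)
    (hconn : ∀ A : Finset α, A.Nonempty → A ≠ Finset.univ → r A + r Aᶜ ≠ rk) :
    Irreducible (∑ S ∈ (Finset.univ : Finset (Finset α)),
      monomial (msum S) ((Polynomial.X : Polynomial K) ^ (rk - r S))) := by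
  classical
  set q : Polynomial K := Polynomial.X with hqdef
  set c : Finset α → Polynomial K := fun S => q ^ (rk - r S) with hcdef
  set P : MvPolynomial α (Polynomial K) :=
    ∑ S ∈ (Finset.univ : Finset (Finset α)), monomial (msum S) (c S) with hPdef
  have hcoeffT : ∀ T : Finset α, MvPolynomial.coeff (msum T) P = c T :=
    fun T => coeff_sum_msum c Finset.univ T (Finset.mem_univ T)
  have hPuniv : MvPolynomial.coeff (msum Finset.univ) P = 1 := by
    rw [hcoeffT, hcdef]; simp [huniv]
  have hP00 : MvPolynomial.coeff 0 P = q ^ rk := by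
    rw [← msum_empty, hcoeffT, hcdef]; simp [h0]
  have hP0 : P ≠ 0 := fun h => by rw [h] at hPuniv; simp at hPuniv
  constructor
  · -- not a unit
    intro hu
    have := hu.map (MvPolynomial.constantCoeff)
    rw [constantCoeff_eq] at this
    rw [hP00] at this
    exact Polynomial.not_isUnit_X ((isUnit_pow_iff (Nat.pos_iff_ne_zero.mp hrk)).mp this)
  · intro F G hFG
    by_contra hcon
    push_neg at hcon
    obtain ⟨hFu, hGu⟩ := hcon
    have hF0 : F ≠ 0 := fun h => hP0 (by rw [hFG, h, zero_mul])
    have hG0 : G ≠ 0 := fun h => hP0 (by rw [hFG, h, mul_zero])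
    -- each variable appears in at most one factor
    have hdeg : ∀ e : α, degreeOf e F + degreeOf e G ≤ 1 := by
      intro e
      rw [← degreeOf_mul_eq_of_domain e hF0 hG0, ← hFG]
      exact degreeOf_sum_msum_le c Finset.univ e
    set A : Finset α := F.vars with hAdef
    have hGA : ∀ i ∈ G.vars, i ∉ A := by
      intro i hiG hiA
      have h1 := one_le_degreeOf_of_mem_vars (F := F) hiA
      have h2 := one_le_degreeOf_of_mem_vars (F := G) hiG
      have := hdeg i
      omega
    have hFA : ∀ i ∈ F.vars, i ∈ A := fun i hi => hi
    have hFAc : ∀ i ∈ F.vars, i ∉ Aᶜ := fun i hi => by simpa using hFA i hi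
    have hGAc : ∀ i ∈ G.vars, i ∈ Aᶜ := fun i hi => by simpa using hGA i hi
    -- neither factor is constant
    have hvarsne : ∀ H : MvPolynomial α (Polynomial K), ¬ IsUnit H →
        (∀ H' : MvPolynomial α (Polynomial K), P = H * H' → H.vars ≠ ∅) := by
      intro H hHu H' hHH' hve
      have hHC := eq_C_of_vars_empty hve
      apply hHu
      have : MvPolynomial.coeff 0 H * MvPolynomial.coeff (msum Finset.univ) H' = 1 := by
        rw [← MvPolynomial.coeff_C_mul, ← hHC, ← hHH', hPuniv]
      have hu0 : IsUnit (MvPolynomial.coeff 0 H) := IsUnit.of_mul_eq_one _ this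
      rw [hHC]
      exact hu0.map MvPolynomial.C
    have hAne : A.Nonempty :=
      Finset.nonempty_iff_ne_empty.mpr (hvarsne F hFu G hFG)
    have hBne : (Aᶜ : Finset α).Nonempty := by
      obtain ⟨i, hi⟩ := Finset.nonempty_iff_ne_empty.mpr
        (hvarsne G hGu F (by rw [hFG, mul_comm]))
      exact ⟨i, hGAc i hi⟩
    have hAneuniv : A ≠ Finset.univ := by
      intro h
      rw [h, Finset.compl_univ] at hBne
      exact Finset.not_nonempty_empty hBne
    -- the two evaluations
    set φA := MvPolynomial.aeval (R := Polynomial K)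
      (fun e => if e ∈ A then MvPolynomial.X e else (0 : MvPolynomial α (Polynomial K)))
    set φB := MvPolynomial.aeval (R := Polynomial K)
      (fun e => if e ∈ Aᶜ then MvPolynomial.X e else (0 : MvPolynomial α (Polynomial K)))
    have hφAP : φA P = F * MvPolynomial.C (MvPolynomial.coeff 0 G) := by
      rw [hFG, map_mul, aeval_eq_self_of_vars_subset A hFA,
        aeval_eq_constant_of_vars_disjoint A hGA]
    have hφBP : φB P = MvPolynomial.C (MvPolynomial.coeff 0 F) * G := by
      rw [hFG, map_mul, aeval_eq_self_of_vars_subset Aᶜ hGAc,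
        aeval_eq_constant_of_vars_disjoint Aᶜ hFAc, mul_comm]
    have h00 : MvPolynomial.coeff 0 F * MvPolynomial.coeff 0 G = q ^ rk := by
      have h2 := congrArg MvPolynomial.constantCoeff hFG
      rw [map_mul] at h2
      rw [constantCoeff_eq] at h2
      exact h2.symm.trans hP00
    -- key identity
    have hkey : φA P * φB P = MvPolynomial.C (q ^ rk) * P := by
      rw [hφAP, hφBP, ← h00, map_mul, hFG]
      ring
    -- coefficient of the full monomial on both sides
    have hLHS : MvPolynomial.coeff (msum Finset.univ) (φA P * φB P)
        = q ^ (rk - r A) * q ^ (rk - r Aᶜ) := by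
      rw [hPdef]
      rw [show φA (∑ S ∈ (Finset.univ : Finset (Finset α)), monomial (msum S) (c S))
          = ∑ S ∈ (Finset.univ : Finset (Finset α)),
              monomial (msum S) (if S ⊆ A then c S else 0) from
        aeval_sum_msum A c Finset.univ]
      rw [show φB (∑ S ∈ (Finset.univ : Finset (Finset α)), monomial (msum S) (c S))
          = ∑ S ∈ (Finset.univ : Finset (Finset α)),
              monomial (msum S) (if S ⊆ Aᶜ then c S else 0) from
        aeval_sum_msum Aᶜ c Finset.univ]
      rw [coeff_univ_mul _ _ A (fun S hS => if_neg hS) (fun T hT => if_neg hT)]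
      rw [if_pos (Finset.Subset.refl A), if_pos (Finset.Subset.refl Aᶜ)]
    have hRHS : MvPolynomial.coeff (msum Finset.univ) (MvPolynomial.C (q ^ rk) * P)
        = q ^ rk := by
      rw [MvPolynomial.coeff_C_mul, hPuniv, mul_one]
    rw [hkey, hRHS, ← pow_add] at hLHS
    have hdegq := congrArg Polynomial.natDegree hLHS
    rw [Polynomial.natDegree_X_pow, Polynomial.natDegree_X_pow] at hdegq
    have hA := hle A
    have hB := hle Aᶜ
    exact hconn A hAne hAneuniv (by omega)

end ZhatAux

open ZhatAux

namespace Bridge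

variable {α : Type} [DecidableEq α] [Fintype α] {K : Type} [Field K]

/-- The swap equivalence `K[v][q] ≃ K[q][v]`. -/
noncomputable def Φ (α : Type) [DecidableEq α] (K : Type) [Field K] :
    Polynomial (MvPolynomial α K) ≃ₐ[K] MvPolynomial α (Polynomial K) :=
  (MvPolynomial.optionEquivLeft K α).symm.trans (MvPolynomial.optionEquivRight K α)

lemma Φ_C_X (e : α) :
    Φ α K (Polynomial.C (MvPolynomial.X e)) = MvPolynomial.X e := by
  have h1 : (MvPolynomial.optionEquivLeft K α).symm (Polynomial.C (MvPolynomial.X e))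
      = MvPolynomial.X (some e) := by
    rw [← optionEquivLeft_X_some K α e, AlgEquiv.symm_apply_apply]
  rw [Φ, AlgEquiv.trans_apply, h1, optionEquivRight_X_some]

lemma Φ_X : Φ α K Polynomial.X = MvPolynomial.C Polynomial.X := by
  have h1 : (MvPolynomial.optionEquivLeft K α).symm Polynomial.X
      = MvPolynomial.X none := by
    rw [← optionEquivLeft_X_none K α, AlgEquiv.symm_apply_apply]
  rw [Φ, AlgEquiv.trans_apply, h1, optionEquivRight_X_none]

lemma Φ_term (A : Finset α) (k : ℕ) :
    Φ α K (Polynomial.C (∏ e ∈ A, MvPolynomial.X e) * Polynomial.X ^ k)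
      = monomial (msum A) ((Polynomial.X : Polynomial K) ^ k) := by
  rw [map_mul, map_pow, Φ_X]
  have hC : Φ α K (Polynomial.C (∏ e ∈ A, MvPolynomial.X e))
      = ∏ e ∈ A, MvPolynomial.X (R := Polynomial K) e := by
    rw [show (Polynomial.C (∏ e ∈ A, MvPolynomial.X (R := K) e))
        = ∏ e ∈ A, Polynomial.C (MvPolynomial.X (R := K) e) from map_prod _ _ _,
      map_prod]
    exact Finset.prod_congr rfl fun e _ => Φ_C_X e
  rw [hC, ← MvPolynomial.C_pow, monomial_eq, msum_prod, mul_comm]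

end Bridge

/-- A finite matroid, presented by its ground set and rank function. -/
structure FinMatroid (α : Type) [DecidableEq α] where
  E : Finset α
  r : Finset α → ℕ

namespace FinMatroid
variable {α : Type} [DecidableEq α]

/-- The rank axioms for a matroid. -/
def Valid (M : FinMatroid α) : Prop :=
  M.r ∅ = 0 ∧
  (∀ A, A ⊆ M.E → M.r A ≤ A.card) ∧
  (∀ A B, A ⊆ B → B ⊆ M.E → M.r A ≤ M.r B) ∧
  (∀ A B, A ⊆ M.E → B ⊆ M.E → M.r (A ∪ B) + M.r (A ∩ B) ≤ M.r A + M.r B)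

/-- The rank `r(M) = r_M(E)` of the matroid. -/
def rank (M : FinMatroid α) : ℕ := M.r M.E

/-- A matroid is connected iff its ground set is nonempty and it admits no
nontrivial separation `E = A ∪ (E \ A)` with `r(A) + r(E \ A) = r(E)`. -/
def Connected (M : FinMatroid α) : Prop :=
  M.E.Nonempty ∧
    ∀ A ⊆ M.E, A.Nonempty → A ≠ M.E → M.r A + M.r (M.E \ A) ≠ M.r M.E

/-- Deletion `M \ e`. -/
def delete (M : FinMatroid α) (e : α) : FinMatroid α :=
  ⟨M.E \ {e}, M.r⟩

/-- Contraction `M / e`, with rank function `A ↦ r(A ∪ {e}) - r({e})`. -/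
def contract (M : FinMatroid α) (e : α) : FinMatroid α :=
  ⟨M.E \ {e}, fun A => M.r (A ∪ {e}) - M.r {e}⟩

/-- Restriction `M | C`. -/
def restrict (M : FinMatroid α) (C : Finset α) : FinMatroid α :=
  ⟨C, M.r⟩

/-- The multivariate Tutte polynomial
`Ẑ_M(q, v) = ∑_{A ⊆ E} q^(r(M) - r_M(A)) ∏_{e ∈ A} v_e`,
as a polynomial in `q` over the polynomial ring `R[v]`. -/
noncomputable def Zhat (M : FinMatroid α) (R : Type) [CommRing R] :
    Polynomial (MvPolynomial α R) :=
  ∑ A ∈ M.E.powerset,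
    Polynomial.C (∏ e ∈ A, MvPolynomial.X e) * Polynomial.X ^ (M.rank - M.r A)

/-- The multivariate Tutte polynomial viewed over the rational function field `K(v)`. -/
noncomputable def ZhatF (M : FinMatroid α) (K : Type) [Field K] :
    Polynomial (FractionRing (MvPolynomial α K)) :=
  (Zhat M K).map (algebraMap (MvPolynomial α K) (FractionRing (MvPolynomial α K)))

end FinMatroid

/-- `galIsFullSymm p n` says that the Galois group of `p` is the full symmetric group
on the `n` roots of `p`: the action on the roots in the splitting field gives an
isomorphism onto the full permutation group of the roots, and there are `n` roots. -/
def galIsFullSymm {F : Type} [Field F] (p : Polynomial F) (n : ℕ) : Prop :=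
  letI : Fact ((p.map (algebraMap F p.SplittingField)).Splits) :=
    ⟨Polynomial.SplittingField.splits p⟩
  Function.Bijective (Polynomial.Gal.galActionHom p p.SplittingField) ∧
    Nat.card (p.rootSet p.SplittingField) = n



section Final

variable {α : Type} [DecidableEq α] [Fintype α]

/-- Rank is monotone up to the full rank. -/
lemma finmat_rank_le (M : FinMatroid α) (hV : M.Valid) {A : Finset α} (hA : A ⊆ M.E) :
    M.r A ≤ M.rank :=
  hV.2.2.1 A M.E hA (Finset.Subset.refl _)

/-- A connected matroid of positive rank has no nonempty subsets of rank zero. -/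
lemma no_loops (M : FinMatroid α) (hV : M.Valid) (hC : M.Connected) (hr : 0 < M.rank)
    {A : Finset α} (hA : A ⊆ M.E) (hne : A.Nonempty) (h0 : M.r A = 0) : False := by
  by_cases hAE : A = M.E
  · rw [hAE] at h0
    rw [FinMatroid.rank] at hr
    omega
  · apply hC.2 A hA hne hAE
    have hsub := hV.2.2.2 A (M.E \ A) hA (Finset.sdiff_subset)
    rw [Finset.union_sdiff_of_subset hA, Finset.inter_sdiff_self, hV.1] at hsub
    have hmono := hV.2.2.1 (M.E \ A) M.E (Finset.sdiff_subset) (Finset.Subset.refl _)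
    omega

lemma zhat_monic (M : FinMatroid α) (hV : M.Valid) (hC : M.Connected) (hr : 0 < M.rank)
    (K : Type) [Field K] : (M.Zhat K).Monic := by
  classical
  apply Polynomial.monic_of_natDegree_le_of_coeff_eq_one M.rank
  · rw [FinMatroid.Zhat]
    apply Polynomial.natDegree_sum_le_of_forall_le
    intro A hA
    refine (Polynomial.natDegree_C_mul_le _ _).trans ?_
    rw [Polynomial.natDegree_X_pow]
    exact Nat.sub_le _ _
  · rw [FinMatroid.Zhat, Polynomial.finset_sum_coeff]
    rw [Finset.sum_eq_single (∅ : Finset α)]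
    · simp [hV.1]
    · intro A hA hAne
      rw [Polynomial.coeff_C_mul, Polynomial.coeff_X_pow, if_neg, mul_zero]
      intro hk
      have hle := finmat_rank_le M hV (Finset.mem_powerset.mp hA)
      have h0 : M.r A = 0 := by omega
      exact no_loops M hV hC hr (Finset.mem_powerset.mp hA)
        (Finset.nonempty_iff_ne_empty.mpr hAne) h0
    · intro h
      exact absurd (Finset.empty_mem_powerset _) h

end Final

set_option synthInstance.maxHeartbeats 1000000 in
/-- for a connected matroid of positive rank, `Ẑ_M` is irreducible
over the rational function field `K(v)`. -/
theorem stmt_3 {α : Type} [DecidableEq α] [Fintype α] (M : FinMatroid α)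
    (hV : M.Valid) (hE : M.E = Finset.univ) (hC : M.Connected) (hr : 0 < M.rank)
    (K : Type) [Field K] :
    Irreducible (M.ZhatF K) := by
  classical
  haveI : UniqueFactorizationMonoid (MvPolynomial α K) := inferInstance
  haveI : IsIntegrallyClosed (MvPolynomial α K) :=
    UniqueFactorizationMonoid.instIsIntegrallyClosed
  have hmonic : (M.Zhat K).Monic := zhat_monic M hV hC hr K
  rw [FinMatroid.ZhatF]
  apply hmonic.irreducible_iff_irreducible_map_fraction_map.mp
  -- transfer along the swap equivalence
  rw [← MulEquiv.irreducible_iff (Bridge.Φ α K)]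
  have hΦ : Bridge.Φ α K (M.Zhat K)
      = ∑ S ∈ (Finset.univ : Finset (Finset α)),
          monomial (msum S) ((Polynomial.X : Polynomial K) ^ (M.rank - M.r S)) := by
    rw [FinMatroid.Zhat, map_sum]
    rw [hE, Finset.powerset_univ]
    exact Finset.sum_congr rfl fun A _ => Bridge.Φ_term A _
  rw [hΦ]
  apply irreducible_sum_msum M.r M.rank hr hV.1
  · intro A
    by_cases hA : A ⊆ M.E
    · exact finmat_rank_le M hV hA
    · exact absurd (hE ▸ Finset.subset_univ A) hA
  · rw [FinMatroid.rank, hE]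
  · intro A hAne hAuniv
    have h := hC.2 A (hE ▸ Finset.subset_univ A) hAne (by rw [hE]; exact hAuniv)
    rw [FinMatroid.rank, hE]
    rwa [hE, ← Finset.compl_eq_univ_sdiff] at h
end

section
/- Let k be a field and f ∈ k[X] a monic polynomial of degree n whose non-leading coefficients a_0, …, a_{n-1} are algebraically independent over some subfield K ⊆ k with k = K(a_0,…,a_{n-1}). Then the Galois group of f over k is the full symmetric group S_n. -/
open Polynomial MvPolynomial

variable (K : Type) [Field K] (n : ℕ)

/-- the images of the variables in the rational function field -/
private noncomputable def xgen (j : Fin n) : FractionRing (MvPolynomial (Fin n) K) :=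
  algebraMap (MvPolynomial (Fin n) K) _ (MvPolynomial.X j)

/-- the coefficients of the generic polynomial -/
private noncomputable def cgen (i : Fin n) : FractionRing (MvPolynomial (Fin n) K) :=
  ((-1 : FractionRing (MvPolynomial (Fin n) K)) ^ (n - (i : ℕ))) *
    algebraMap (MvPolynomial (Fin n) K) _ (MvPolynomial.esymm (Fin n) K (n - (i : ℕ)))

private lemma aeval_xgen (p : MvPolynomial (Fin n) K) :
    MvPolynomial.aeval (xgen K n) p = algebraMap (MvPolynomial (Fin n) K) _ p :=
  (DFunLike.congr_fun (MvPolynomial.aeval_unique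
    (IsScalarTower.toAlgHom K (MvPolynomial (Fin n) K)
      (FractionRing (MvPolynomial (Fin n) K)))).symm p)

private lemma cgen_algInd : AlgebraicIndependent K (cgen K n) := by
  have hs' : Function.Injective (MvPolynomial.aeval
      (fun j : Fin n => algebraMap (MvPolynomial (Fin n) K) (FractionRing (MvPolynomial (Fin n) K)) (MvPolynomial.esymm (Fin n) K (j + 1))) : MvPolynomial (Fin n) K →ₐ[K] FractionRing (MvPolynomial (Fin n) K)) := by
    have heq : (MvPolynomial.aeval
        (fun j : Fin n => algebraMap (MvPolynomial (Fin n) K) (FractionRing (MvPolynomial (Fin n) K)) (MvPolynomial.esymm (Fin n) K (j + 1))) : MvPolynomial (Fin n) K →ₐ[K] FractionRing (MvPolynomial (Fin n) K))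
        = (IsScalarTower.toAlgHom K (MvPolynomial (Fin n) K) (FractionRing (MvPolynomial (Fin n) K))).comp
            ((MvPolynomial.symmetricSubalgebra (Fin n) K).val.comp
              (MvPolynomial.esymmAlgHom (Fin n) K n)) := by
      apply MvPolynomial.algHom_ext
      intro i
      simp [MvPolynomial.esymmAlgHom]
    rw [heq]
    simp only [AlgHom.coe_comp]
    exact (IsFractionRing.injective (MvPolynomial (Fin n) K) (FractionRing (MvPolynomial (Fin n) K))).comp
      (Subtype.val_injective.comp
        (MvPolynomial.esymmAlgHom_injective (σ := Fin n) (n := n) K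
          (le_of_eq (Fintype.card_fin n).symm)))
  set flip : Fin n → Fin n := fun i => ⟨n - 1 - (i : ℕ), by have := i.isLt; omega⟩ with hflip
  set Φ : MvPolynomial (Fin n) K →ₐ[K] MvPolynomial (Fin n) K := MvPolynomial.aeval
    (fun i : Fin n => MvPolynomial.C ((-1 : K) ^ (n - (i : ℕ))) * MvPolynomial.X (flip i)) with hΦdef
  set Ψ : MvPolynomial (Fin n) K →ₐ[K] MvPolynomial (Fin n) K := MvPolynomial.aeval
    (fun i : Fin n => MvPolynomial.C ((-1 : K) ^ (n - ((flip i) : ℕ))) * MvPolynomial.X (flip i))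
    with hΨdef
  have hΨΦ : Ψ.comp Φ = AlgHom.id K (MvPolynomial (Fin n) K) := by
    apply MvPolynomial.algHom_ext
    intro i
    have hlt := i.isLt
    have h1 : flip (flip i) = i := Fin.ext (by simp only [hflip]; omega)
    rw [hΦdef, hΨdef]
    simp only [AlgHom.coe_comp, Function.comp_apply, MvPolynomial.aeval_X, AlgHom.id_apply,
      map_mul, MvPolynomial.aeval_C, MvPolynomial.algebraMap_eq, h1]
    rw [← mul_assoc, ← MvPolynomial.C_mul, ← pow_add]
    have h3 : n - (i : ℕ) + (n - (n - 1 - (n - 1 - (i : ℕ)))) = (n - (i : ℕ)) + (n - (i : ℕ)) := by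
      omega
    rw [Even.neg_one_pow ⟨n - (i : ℕ), rfl⟩, MvPolynomial.C_1, one_mul]
  have hΦinj : Function.Injective Φ := by
    intro p q h
    have hp := DFunLike.congr_fun hΨΦ p
    have hq := DFunLike.congr_fun hΨΦ q
    simp only [AlgHom.coe_comp, Function.comp_apply, AlgHom.id_apply] at hp hq
    rw [← hp, ← hq, h]
  have key : (MvPolynomial.aeval (cgen K n) : MvPolynomial (Fin n) K →ₐ[K] FractionRing (MvPolynomial (Fin n) K))
      = (MvPolynomial.aeval
          (fun j : Fin n => algebraMap (MvPolynomial (Fin n) K) (FractionRing (MvPolynomial (Fin n) K)) (MvPolynomial.esymm (Fin n) K (j + 1))) : MvPolynomial (Fin n) K →ₐ[K] FractionRing (MvPolynomial (Fin n) K)).comp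
          Φ := by
    apply MvPolynomial.algHom_ext
    intro i
    have hlt := i.isLt
    have h2 : ((flip i : Fin n) : ℕ) + 1 = n - (i : ℕ) := by simp only [hflip]; omega
    rw [hΦdef]
    simp only [AlgHom.coe_comp, Function.comp_apply, MvPolynomial.aeval_X, map_mul,
      MvPolynomial.aeval_C]
    rw [h2, map_pow, map_neg, map_one]
    rfl
  rw [algebraicIndependent_iff_injective_aeval, key]
  simp only [AlgHom.coe_comp]
  exact hs'.comp hΦinj

private lemma prod_eq : (∏ j : Fin n, (Polynomial.X - Polynomial.C (xgen K n j))) =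
    ((Finset.univ.val.map (xgen K n)).map (fun t => Polynomial.X - Polynomial.C t)).prod := by
  rw [Multiset.map_map]
  exact Finset.prod_eq_multiset_prod _ _

private lemma prod_monic : (∏ j : Fin n, (Polynomial.X - Polynomial.C (xgen K n j))).Monic :=
  monic_prod_of_monic _ _ fun j _ => monic_X_sub_C _

private lemma prod_natDegree :
    (∏ j : Fin n, (Polynomial.X - Polynomial.C (xgen K n j))).natDegree = n := by
  rw [natDegree_prod_of_monic _ _ fun j _ => monic_X_sub_C _]
  simp

private lemma prod_coeff (m : ℕ) (hm : m < n) :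
    (∏ j : Fin n, (Polynomial.X - Polynomial.C (xgen K n j))).coeff m = cgen K n ⟨m, hm⟩ := by
  rw [prod_eq]
  have hcard : Multiset.card (Finset.univ.val.map (xgen K n)) = n := by simp
  rw [Multiset.prod_X_sub_C_coeff _ (by rw [hcard]; omega), hcard,
    ← MvPolynomial.aeval_esymm_eq_multiset_esymm (R := K) (σ := Fin n) (n - m) (xgen K n),
    aeval_xgen]
  rfl

private lemma prod_roots : (∏ j : Fin n, (Polynomial.X - Polynomial.C (xgen K n j))).roots
    = Finset.univ.val.map (xgen K n) := by
  rw [prod_eq, roots_multiset_prod_X_sub_C]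


set_option maxHeartbeats 1000000 in
set_option synthInstance.maxHeartbeats 400000 in
/-- the generic monic polynomial of degree `n`, i.e. a monic polynomial
whose non-leading coefficients are algebraically independent over a subfield `K`
with `k = K(a_0, …, a_{n-1})`, has Galois group the full symmetric group `S_n`. -/
theorem stmt_7 (K k : Type) [Field K] [Field k] [Algebra K k] (n : ℕ)
    (f : Polynomial k) (hf : f.Monic) (hd : f.natDegree = n)
    (hind : AlgebraicIndependent K (fun i : Fin n => f.coeff i))
    (hgen : IntermediateField.adjoin K (Set.range (fun i : Fin n => f.coeff i)) = ⊤) :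
    galIsFullSymm f n := by
  classical
  have hfne : f ≠ 0 := hf.ne_zero
  have hc := cgen_algInd K n
  -- the embedding of k into the rational function field
  let E12 : k ≃ₐ[K] (IntermediateField.adjoin K (Set.range (fun i : Fin n => f.coeff i))) :=
    (IntermediateField.topEquiv (F := K) (E := k)).symm.trans
      (IntermediateField.equivOfEq hgen.symm)
  let EE : k ≃ₐ[K] (IntermediateField.adjoin K (Set.range (cgen K n))) :=
    (E12.trans hind.aevalEquivField.symm).trans hc.aevalEquivField
  let eAlg : k →ₐ[K] FractionRing (MvPolynomial (Fin n) K) :=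
    (IntermediateField.adjoin K (Set.range (cgen K n))).val.comp EE.toAlgHom
  have heMem : ∀ y : k, eAlg y ∈ IntermediateField.adjoin K (Set.range (cgen K n)) :=
    fun y => (EE y).2
  have he_a : ∀ i : Fin n, eAlg (f.coeff i) = cgen K n i := by
    intro i
    have h1 : hind.aevalEquivField
        (algebraMap (MvPolynomial (Fin n) K) _ (MvPolynomial.X i)) = E12 (f.coeff i) := by
      apply Subtype.ext
      rw [AlgebraicIndependent.aevalEquivField_algebraMap_apply_coe, MvPolynomial.aeval_X]
      rfl
    show ((EE (f.coeff i)) : _) = cgen K n i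
    have h2 : EE (f.coeff i) = hc.aevalEquivField
        (algebraMap (MvPolynomial (Fin n) K) _ (MvPolynomial.X i)) := by
      show hc.aevalEquivField (hind.aevalEquivField.symm (E12 (f.coeff i))) = _
      rw [← h1, AlgEquiv.symm_apply_apply]
    rw [h2, AlgebraicIndependent.aevalEquivField_algebraMap_apply_coe, MvPolynomial.aeval_X]
  letI : Algebra k (FractionRing (MvPolynomial (Fin n) K)) := eAlg.toRingHom.toAlgebra
  haveI : IsScalarTower K k (FractionRing (MvPolynomial (Fin n) K)) :=
    IsScalarTower.of_algebraMap_eq fun r => (eAlg.commutes r).symm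
  have halgmap : ∀ y : k, algebraMap k (FractionRing (MvPolynomial (Fin n) K)) y = eAlg y :=
    fun _ => rfl
  -- the image of f
  have hfmap : f.map (algebraMap k (FractionRing (MvPolynomial (Fin n) K)))
      = ∏ j : Fin n, (Polynomial.X - Polynomial.C (xgen K n j)) := by
    apply Polynomial.ext
    intro m
    rcases lt_trichotomy m n with hm | hEq | hm
    · rw [Polynomial.coeff_map, prod_coeff K n m hm, halgmap]
      exact he_a ⟨m, hm⟩
    · rw [hEq, Polynomial.coeff_map]
      have h1 : f.coeff n = 1 := by rw [← hd]; exact hf.coeff_natDegree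
      have h2 : (∏ j : Fin n, (Polynomial.X - Polynomial.C (xgen K n j))).coeff n = 1 := by
        have h3 := (prod_monic K n).coeff_natDegree
        rwa [prod_natDegree] at h3
      rw [h1, h2, map_one]
    · rw [Polynomial.coeff_eq_zero_of_natDegree_lt, Polynomial.coeff_eq_zero_of_natDegree_lt]
      · rw [prod_natDegree]; exact hm
      · rw [hf.natDegree_map, hd]; exact hm
  have hsplits : (f.map (algebraMap k (FractionRing (MvPolynomial (Fin n) K)))).Splits := by
    rw [hfmap]
    exact Polynomial.Splits.prod fun j _ => Polynomial.Splits.X_sub_C _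
  have hrootSetL : f.rootSet (FractionRing (MvPolynomial (Fin n) K)) = Set.range (xgen K n) := by
    ext z
    simp only [Polynomial.rootSet, Polynomial.aroots, hfmap, prod_roots, Finset.mem_coe,
      Multiset.mem_toFinset, Multiset.mem_map, Finset.mem_val, Finset.mem_univ, true_and,
      Set.mem_range]
  -- L is a splitting field of f over k
  have hpoly : ∀ p : MvPolynomial (Fin n) K,
      algebraMap (MvPolynomial (Fin n) K) (FractionRing (MvPolynomial (Fin n) K)) p
        ∈ IntermediateField.adjoin k (Set.range (xgen K n)) := by
    intro p
    induction p using MvPolynomial.induction_on with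
    | C r =>
      have h1 : algebraMap (MvPolynomial (Fin n) K) (FractionRing (MvPolynomial (Fin n) K))
          (MvPolynomial.C r)
          = algebraMap k (FractionRing (MvPolynomial (Fin n) K)) (algebraMap K k r) := by
        rw [← MvPolynomial.algebraMap_eq,
          ← IsScalarTower.algebraMap_apply K (MvPolynomial (Fin n) K)
            (FractionRing (MvPolynomial (Fin n) K)),
          IsScalarTower.algebraMap_apply K k (FractionRing (MvPolynomial (Fin n) K))]
      rw [h1]
      exact IntermediateField.algebraMap_mem _ _
    | add p q hp hq => rw [RingHom.map_add]; exact add_mem hp hq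
    | mul_X p i hp =>
      rw [RingHom.map_mul]
      exact mul_mem hp (IntermediateField.subset_adjoin _ _ ⟨i, rfl⟩)
  have hIF : IntermediateField.adjoin k (Set.range (xgen K n)) = ⊤ := by
    rw [eq_top_iff]
    rintro z -
    obtain ⟨p, q, -, rfl⟩ := IsFractionRing.div_surjective (A := MvPolynomial (Fin n) K) z
    exact div_mem (hpoly p) (hpoly q)
  have halgroots : ∀ x ∈ f.rootSet (FractionRing (MvPolynomial (Fin n) K)), IsAlgebraic k x :=
    fun x hx => ⟨f, hfne, (Polynomial.mem_rootSet.mp hx).2⟩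
  have hadj : Algebra.adjoin k (f.rootSet (FractionRing (MvPolynomial (Fin n) K))) = ⊤ := by
    rw [← IntermediateField.adjoin_toSubalgebra_of_isAlgebraic halgroots, hrootSetL, hIF]
    exact IntermediateField.top_toSubalgebra
  haveI hSFL : Polynomial.IsSplittingField k (FractionRing (MvPolynomial (Fin n) K)) f :=
    ⟨hsplits, hadj⟩
  let ε : FractionRing (MvPolynomial (Fin n) K) ≃ₐ[k] f.SplittingField :=
    Polynomial.IsSplittingField.algEquiv _ f
  haveI hFact : Fact ((f.map (algebraMap k f.SplittingField)).Splits) :=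
    ⟨Polynomial.SplittingField.splits f⟩
  -- roots in the splitting field
  let ρ : Fin n → f.SplittingField := fun j => ε (xgen K n j)
  have hρmem : ∀ j, ρ j ∈ f.rootSet f.SplittingField := by
    intro j
    apply Polynomial.rootSet_mapsTo (ε : FractionRing (MvPolynomial (Fin n) K) →ₐ[k]
      f.SplittingField)
    rw [hrootSetL]
    exact ⟨j, rfl⟩
  have hxinj : Function.Injective (xgen K n) := fun i j h =>
    MvPolynomial.X_injective (IsFractionRing.injective (MvPolynomial (Fin n) K)
      (FractionRing (MvPolynomial (Fin n) K)) h)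
  let bFun : Fin n → (f.rootSet f.SplittingField) := fun j => ⟨ρ j, hρmem j⟩
  have hbbij : Function.Bijective bFun := by
    constructor
    · intro i j h
      exact hxinj (ε.injective (congrArg Subtype.val h))
    · rintro ⟨r, hr⟩
      have h1 : ε.symm r ∈ f.rootSet (FractionRing (MvPolynomial (Fin n) K)) :=
        Polynomial.rootSet_mapsTo (ε.symm : f.SplittingField →ₐ[k]
          FractionRing (MvPolynomial (Fin n) K)) hr
      rw [hrootSetL] at h1
      obtain ⟨j, hj⟩ := h1
      refine ⟨j, Subtype.ext ?_⟩
      show ε (xgen K n j) = r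
      rw [hj, AlgEquiv.apply_symm_apply]
  let b : Fin n ≃ (f.rootSet f.SplittingField) := Equiv.ofBijective bFun hbbij
  have hcard : Nat.card (f.rootSet f.SplittingField) = n := by
    rw [Nat.card_congr b.symm]
    simp
  -- the S_n-action on L
  have hmapnzd : ∀ σ : Equiv.Perm (Fin n),
      Submonoid.map (MvPolynomial.renameEquiv K σ)
          (nonZeroDivisors (MvPolynomial (Fin n) K))
        = nonZeroDivisors (MvPolynomial (Fin n) K) := by
    intro σ
    ext x
    simp only [Submonoid.mem_map, mem_nonZeroDivisors_iff_ne_zero]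
    have hren : ∀ z : MvPolynomial (Fin n) K,
        (MvPolynomial.rename ⇑σ) ((MvPolynomial.rename ⇑σ.symm) z) = z := by
      intro z
      rw [MvPolynomial.rename_rename, Equiv.self_comp_symm, MvPolynomial.rename_id, AlgHom.id_apply]
    constructor
    · rintro ⟨y, hy, rfl⟩
      intro h0
      refine hy (MvPolynomial.rename_injective (⇑σ) σ.injective ?_)
      rw [map_zero]
      exact h0
    · intro hx
      refine ⟨(MvPolynomial.rename ⇑σ.symm) x, fun h0 => hx ?_, hren x⟩
      rw [← hren x, h0, map_zero]
  let Θ : Equiv.Perm (Fin n) → (FractionRing (MvPolynomial (Fin n) K) ≃ₐ[K]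
      FractionRing (MvPolynomial (Fin n) K)) :=
    fun σ => IsLocalization.algEquivOfAlgEquiv _ _ (MvPolynomial.renameEquiv K σ) (hmapnzd σ)
  have hΘ : ∀ (σ : Equiv.Perm (Fin n)) (p : MvPolynomial (Fin n) K),
      Θ σ (algebraMap (MvPolynomial (Fin n) K) _ p)
        = algebraMap (MvPolynomial (Fin n) K) _ (MvPolynomial.rename σ p) := by
    intro σ p
    exact IsLocalization.algEquivOfAlgEquiv_eq (hmapnzd σ) p
  have hΘfixadj : ∀ (σ : Equiv.Perm (Fin n)),
      ∀ z ∈ IntermediateField.adjoin K (Set.range (cgen K n)), Θ σ z = z := by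
    intro σ z hz
    induction hz using IntermediateField.adjoin_induction with
    | mem x hx =>
      obtain ⟨i, rfl⟩ := hx
      show Θ σ (cgen K n i) = cgen K n i
      rw [show cgen K n i = ((-1 : FractionRing (MvPolynomial (Fin n) K)) ^ (n - (i : ℕ))) *
        algebraMap (MvPolynomial (Fin n) K) _
          (MvPolynomial.esymm (Fin n) K (n - (i : ℕ))) from rfl]
      rw [map_mul, map_pow, map_neg, map_one, hΘ, MvPolynomial.rename_esymm]
    | algebraMap r => exact (Θ σ).commutes r
    | add x y _ _ hx hy => rw [map_add, hx, hy]
    | inv x _ hx => rw [map_inv₀, hx]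
    | mul x y _ _ hx hy => rw [map_mul, hx, hy]
  have hΘfix : ∀ (σ : Equiv.Perm (Fin n)) (y : k),
      Θ σ (algebraMap k (FractionRing (MvPolynomial (Fin n) K)) y)
        = algebraMap k (FractionRing (MvPolynomial (Fin n) K)) y := by
    intro σ y
    rw [halgmap]
    exact hΘfixadj σ _ (heMem y)
  let Φk : Equiv.Perm (Fin n) → (FractionRing (MvPolynomial (Fin n) K) ≃ₐ[k]
      FractionRing (MvPolynomial (Fin n) K)) :=
    fun σ => AlgEquiv.ofRingEquiv (f := (Θ σ).toRingEquiv) (hΘfix σ)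
  have hΦk : ∀ (σ : Equiv.Perm (Fin n)) (j : Fin n), Φk σ (xgen K n j) = xgen K n (σ j) := by
    intro σ j
    show Θ σ (algebraMap (MvPolynomial (Fin n) K) _ (MvPolynomial.X j)) = _
    rw [hΘ, MvPolynomial.rename_X]
    rfl
  -- conclude
  refine ⟨⟨Polynomial.Gal.galActionHom_injective f _, ?_⟩, hcard⟩
  intro τ
  let req := Polynomial.Gal.rootsEquivRoots f f.SplittingField
  let π : Equiv.Perm (f.rootSet f.SplittingField) := req.symm.permCongr τ
  let σ : Equiv.Perm (Fin n) := b.symm.permCongr π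
  let ϕ : f.Gal := ε.symm.trans ((Φk σ).trans ε)
  have hϕ : ∀ y : (f.rootSet f.SplittingField),
      ϕ (y : f.SplittingField) = ((π y) : f.SplittingField) := by
    intro y
    obtain ⟨j, rfl⟩ := b.surjective y
    have h1 : ϕ ((b j : f.rootSet f.SplittingField) : f.SplittingField)
        = ((b (σ j) : f.rootSet f.SplittingField) : f.SplittingField) := by
      show ε ((Φk σ) (ε.symm (ε (xgen K n j)))) = ε (xgen K n (σ j))
      rw [AlgEquiv.symm_apply_apply, hΦk]
    have h2 : b (σ j) = π (b j) := by
      show b (b.symm.permCongr π j) = π (b j)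
      rw [Equiv.permCongr_apply]
      simp
    rw [h1, h2]
  refine ⟨ϕ, ?_⟩
  apply Equiv.ext
  intro x
  show Polynomial.Gal.galActionHom f f.SplittingField ϕ x = τ x
  rw [show (Polynomial.Gal.galActionHom f f.SplittingField ϕ) x = ϕ • x from rfl,
    Polynomial.Gal.smul_def, Equiv.apply_eq_iff_eq_symm_apply]
  apply Subtype.ext
  have hππ : π (req.symm x) = req.symm (τ x) := by
    rw [show π (req.symm x) = req.symm (τ (req.symm.symm (req.symm x))) from
      Equiv.permCongr_apply _ _ _]
    simp
  show ϕ ((req.symm x : f.rootSet f.SplittingField) : f.SplittingField)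
    = ((req.symm (τ x) : f.rootSet f.SplittingField) : f.SplittingField)
  rw [hϕ (req.symm x), hππ]
end

section
/- Let K be a field, n ≥ 1, and let σ_1, …, σ_{n+1} be the elementary symmetric polynomials in n+1 indeterminates v_1, …, v_{n+1} over K. Then the n elements σ_1, σ_2, …, σ_{n-1}, σ_n + σ_{n+1} are algebraically independent over K. -/
open Polynomial MvPolynomial

lemma multiset_esymm_cons_zero {R : Type*} [CommSemiring R] (m : Multiset R) (k : ℕ) :
    ((0 : R) ::ₘ m).esymm k = m.esymm k := by
  cases k with
  | zero => simp [Multiset.esymm]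
  | succ k =>
    rw [Multiset.esymm, Multiset.powersetCard_cons, Multiset.map_add, Multiset.sum_add,
      Multiset.map_map]
    have h0 : ∀ t ∈ Multiset.powersetCard k m,
        (Multiset.prod ∘ (Multiset.cons (0 : R))) t = 0 := by
      intro t _; simp
    rw [Multiset.map_congr rfl h0, Multiset.esymm]
    simp

lemma esymm_card_lt (K : Type) [Field K] (n k : ℕ) (h : n < k) :
    MvPolynomial.esymm (Fin n) K k = 0 := by
  rw [MvPolynomial.esymm, Finset.powersetCard_eq_empty.2 (by simpa using h), Finset.sum_empty]

lemma aeval_kill_last_esymm (K : Type) [Field K] (n k : ℕ) :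
    MvPolynomial.aeval
      (fun i : Fin (n + 1) =>
        if h : (i : ℕ) < n then (MvPolynomial.X ⟨(i : ℕ), h⟩ : MvPolynomial (Fin n) K) else 0)
      (MvPolynomial.esymm (Fin (n + 1)) K k) = MvPolynomial.esymm (Fin n) K k := by
  rw [MvPolynomial.aeval_esymm_eq_multiset_esymm]
  have hms : (Finset.univ : Finset (Fin (n + 1))).val.map
      (fun i : Fin (n + 1) =>
        if h : (i : ℕ) < n then (MvPolynomial.X ⟨(i : ℕ), h⟩ : MvPolynomial (Fin n) K) else 0) =
      (0 : MvPolynomial (Fin n) K) ::ₘ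
        ((Finset.univ : Finset (Fin n)).val.map MvPolynomial.X) := by
    rw [Fin.univ_castSuccEmb]
    simp only [Finset.cons_val, Finset.map_val, Multiset.map_cons, Multiset.map_map]
    congr 1
    · simp [Fin.last]
    · apply Multiset.map_congr rfl
      intro j _
      simp [Function.comp, Fin.castSuccEmb, Fin.castSucc, Fin.is_lt]
  rw [hms, multiset_esymm_cons_zero, ← MvPolynomial.esymm_eq_multiset_esymm]

lemma esymm_algebraicIndependent (K : Type) [Field K] (n : ℕ) :
    AlgebraicIndependent K (fun i : Fin n => MvPolynomial.esymm (Fin n) K ((i : ℕ) + 1)) := by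
  rw [algebraicIndependent_iff_injective_aeval]
  intro p q hpq
  apply MvPolynomial.esymmAlgHom_fin_injective K (le_refl n)
  apply Subtype.val_injective
  rw [MvPolynomial.esymmAlgHom_apply, MvPolynomial.esymmAlgHom_apply]
  exact hpq

/-- the elements `σ₁, …, σ_{n-1}, σ_n + σ_{n+1}` of the polynomial ring
in `n+1` variables, where `σ_i` is the `i`-th elementary symmetric polynomial, are
algebraically independent over `K`. -/
theorem stmt_10 (K : Type) [Field K] (n : ℕ) (hn : 1 ≤ n) :
    AlgebraicIndependent K (fun i : Fin n =>
      if (i : ℕ) + 1 = n then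
        MvPolynomial.esymm (Fin (n + 1)) K n + MvPolynomial.esymm (Fin (n + 1)) K (n + 1)
      else
        MvPolynomial.esymm (Fin (n + 1)) K ((i : ℕ) + 1)) := by
  set φ : MvPolynomial (Fin (n + 1)) K →ₐ[K] MvPolynomial (Fin n) K :=
    MvPolynomial.aeval
      (fun i : Fin (n + 1) =>
        if h : (i : ℕ) < n then (MvPolynomial.X ⟨(i : ℕ), h⟩ : MvPolynomial (Fin n) K) else 0)
    with hφ
  apply AlgebraicIndependent.of_comp φ
  have hcomp : (φ ∘ fun i : Fin n =>
      if (i : ℕ) + 1 = n then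
        MvPolynomial.esymm (Fin (n + 1)) K n + MvPolynomial.esymm (Fin (n + 1)) K (n + 1)
      else
        MvPolynomial.esymm (Fin (n + 1)) K ((i : ℕ) + 1)) =
      fun i : Fin n => MvPolynomial.esymm (Fin n) K ((i : ℕ) + 1) := by
    funext i
    by_cases hi : (i : ℕ) + 1 = n
    · simp only [Function.comp_apply, hi, if_true, map_add, hφ, aeval_kill_last_esymm,
        esymm_card_lt K n (n + 1) (Nat.lt_succ_self n), add_zero]
    · simp only [Function.comp_apply, hi, if_false, hφ, aeval_kill_last_esymm]
  rw [hcomp]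
  exact esymm_algebraicIndependent K n
end

section
/- Let M be a finite connected matroid of positive rank n and K any field. Writing Ẑ_M(q,v) = q^n + a_{n-1}q^{n-1} + ⋯ + a_1 q + a_0 with a_i ∈ K[v], the coefficients a_0, a_1, …, a_{n-1} are algebraically independent over K. -/
open Polynomial MvPolynomial

set_option linter.unusedSectionVars false
namespace Stmt12Aux

variable {α : Type} [DecidableEq α]

/-- Greedy growth: go through the list, adding an element whenever the rank stays `≤ k`. -/
def grow (r : Finset α → ℕ) (k : ℕ) : List α → Finset α → Finset α
  | [], S => S
  | e :: l, S => grow r k l (if r (insert e S) ≤ k then insert e S else S)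

lemma subset_grow (r : Finset α → ℕ) (k : ℕ) (l : List α) (S : Finset α) :
    S ⊆ grow r k l S := by
  induction l generalizing S with
  | nil => exact Finset.Subset.refl _
  | cons e l ih =>
    refine Finset.Subset.trans ?_ (ih _)
    split <;> simp [Finset.subset_insert]

lemma grow_subset (r : Finset α → ℕ) (k : ℕ) (l : List α) (S : Finset α)
    {E : Finset α} (hS : S ⊆ E) (hl : ∀ x ∈ l, x ∈ E) :
    grow r k l S ⊆ E := by
  induction l generalizing S with
  | nil => exact hS
  | cons e l ih =>
    refine ih _ ?_ (fun x hx => hl x (List.mem_cons_of_mem _ hx))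
    have he : e ∈ E := hl e List.mem_cons_self
    split
    · exact Finset.insert_subset he hS
    · exact hS

section Matroid

variable (M : FinMatroid α) (hV : M.Valid)
include hV

lemma r_mono {A B : Finset α} (hAB : A ⊆ B) (hB : B ⊆ M.E) : M.r A ≤ M.r B :=
  hV.2.2.1 A B hAB hB

lemma r_insert_le {A : Finset α} (e : α) (hA : A ⊆ M.E) (he : e ∈ M.E) :
    M.r (insert e A) ≤ M.r A + 1 := by
  have hsub := hV.2.2.2 A {e} hA (by simpa using he)
  have h1 : M.r {e} ≤ 1 := by simpa using hV.2.1 {e} (by simpa using he)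
  have : A ∪ {e} = insert e A := by
    ext x; simp [or_comm]
  rw [this] at hsub
  omega

lemma rank_grow_le {k : ℕ} {l : List α} {S : Finset α} (hS : M.r S ≤ k) :
    M.r (grow M.r k l S) ≤ k := by
  induction l generalizing S with
  | nil => exact hS
  | cons e l ih =>
    refine ih ?_
    split
    · assumption
    · exact hS

lemma grow_skip {k : ℕ} {l : List α} {S : Finset α}
    (hS : S ⊆ M.E) (hl : ∀ x ∈ l, x ∈ M.E) :
    ∀ f ∈ l, f ∉ grow M.r k l S → k < M.r (insert f (grow M.r k l S)) := by
  induction l generalizing S with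
  | nil => intro f hf; exact absurd hf List.not_mem_nil
  | cons e l ih =>
    intro f hf hfG
    have he : e ∈ M.E := hl e List.mem_cons_self
    have hl' : ∀ x ∈ l, x ∈ M.E := fun x hx => hl x (List.mem_cons_of_mem _ hx)
    rcases List.mem_cons.1 hf with rfl | hf'
    · -- f = e
      simp only [grow] at hfG ⊢
      by_cases hc : M.r (insert f S) ≤ k
      · rw [if_pos hc] at hfG ⊢
        exact absurd (subset_grow _ _ _ _ (Finset.mem_insert_self _ _)) hfG
      · rw [if_neg hc] at hfG ⊢
        push_neg at hc
        refine lt_of_lt_of_le hc (r_mono M hV ?_ ?_)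
        · exact Finset.insert_subset_insert _ (subset_grow _ _ _ _)
        · exact Finset.insert_subset he (grow_subset _ _ _ _ hS hl')
    · simp only [grow] at hfG ⊢
      by_cases hc : M.r (insert e S) ≤ k
      · rw [if_pos hc] at hfG ⊢
        exact ih (Finset.insert_subset he hS) hl' f hf' hfG
      · rw [if_neg hc] at hfG ⊢
        exact ih hS hl' f hf' hfG

lemma grow_chain {k : ℕ} {l : List α} {S S' : Finset α}
    (hl : ∀ x ∈ l, x ∈ M.E)
    (hSS' : S ⊆ S') (hS' : S' ⊆ M.E) (h1 : M.r S ≤ k) (h2 : M.r S' ≤ k + 1)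
    (h3 : S = S' ∨ M.r S = k) :
    grow M.r k l S ⊆ grow M.r (k+1) l S' := by
  induction l generalizing S S' with
  | nil => exact hSS'
  | cons e l ih =>
    have he : e ∈ M.E := hl e List.mem_cons_self
    have hl' : ∀ x ∈ l, x ∈ M.E := fun x hx => hl x (List.mem_cons_of_mem _ hx)
    have hS : S ⊆ M.E := hSS'.trans hS'
    simp only [grow]
    rcases h3 with rfl | hrk
    · -- S = S'
      by_cases hadd : M.r (insert e S) ≤ k
      · rw [if_pos hadd, if_pos (hadd.trans (Nat.le_succ k))]
        exact ih hl' (Finset.Subset.refl _) (Finset.insert_subset he hS) hadd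
          (hadd.trans (Nat.le_succ k)) (Or.inl rfl)
      · rw [if_neg hadd]
        have hle : M.r (insert e S) ≤ M.r S + 1 := r_insert_le M hV e hS he
        push_neg at hadd
        have hrk : M.r S = k := le_antisymm h1 (by omega)
        have h2' : M.r (insert e S) ≤ k + 1 := by omega
        rw [if_pos h2']
        exact ih hl' (Finset.subset_insert _ _) (Finset.insert_subset he hS)
          h1 h2' (Or.inr hrk)
    · -- M.r S = k
      by_cases hadd : M.r (insert e S) ≤ k
      · rw [if_pos hadd]
        -- show M.r (insert e S') ≤ k + 1 via submodularity
        have hsub := hV.2.2.2 S' (insert e S) hS' (Finset.insert_subset he hS)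
        have hu : S' ∪ insert e S = insert e S' := by
          ext x
          simp only [Finset.mem_union, Finset.mem_insert]
          constructor
          · rintro (h | h | h)
            · exact Or.inr h
            · exact Or.inl h
            · exact Or.inr (hSS' h)
          · rintro (h | h)
            · exact Or.inr (Or.inl h)
            · exact Or.inl h
        have hi : S ⊆ S' ∩ insert e S :=
          Finset.subset_inter hSS' (Finset.subset_insert _ _)
        have hri : M.r S ≤ M.r (S' ∩ insert e S) :=
          r_mono M hV hi ((Finset.inter_subset_left).trans hS')
        rw [hu] at hsub
        have h2' : M.r (insert e S') ≤ k + 1 := by omega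
        rw [if_pos h2']
        refine ih hl' (Finset.insert_subset_insert _ hSS')
          (Finset.insert_subset he hS') hadd h2' (Or.inr ?_)
        have : M.r S ≤ M.r (insert e S) :=
          r_mono M hV (Finset.subset_insert _ _) (Finset.insert_subset he hS)
        omega
      · rw [if_neg hadd]
        by_cases hadd' : M.r (insert e S') ≤ k + 1
        · rw [if_pos hadd']
          exact ih hl' (hSS'.trans (Finset.subset_insert _ _))
            (Finset.insert_subset he hS') h1 hadd' (Or.inr hrk)
        · rw [if_neg hadd']
          exact ih hl' hSS' hS' h1 h2 (Or.inr hrk)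


/-- The greedy rank-`k` set. -/
noncomputable def F (k : ℕ) : Finset α := grow M.r k M.E.toList ∅

omit hV in
lemma F_subset_E (k : ℕ) : F M k ⊆ M.E :=
  grow_subset _ _ _ _ (Finset.empty_subset _) (fun x hx => Finset.mem_toList.1 hx)

lemma rank_F_le (k : ℕ) : M.r (F M k) ≤ k :=
  rank_grow_le M hV (by simp [hV.1])

lemma skip_F {k : ℕ} {e : α} (he : e ∈ M.E) (heF : e ∉ F M k) :
    k < M.r (insert e (F M k)) :=
  grow_skip M hV (Finset.empty_subset _) (fun x hx => Finset.mem_toList.1 hx)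
    e (Finset.mem_toList.2 he) heF

lemma F_max {k : ℕ} {A : Finset α} (hA : A ⊆ M.E) (hrA : M.r A = k)
    (hFA : F M k ⊆ A) : A = F M k := by
  by_contra hne
  obtain ⟨e, heA, heF⟩ := Finset.exists_of_ssubset (hFA.ssubset_of_ne (Ne.symm hne))
  have h1 : k < M.r (insert e (F M k)) := skip_F M hV (hA heA) heF
  have h2 : M.r (insert e (F M k)) ≤ M.r A :=
    r_mono M hV (Finset.insert_subset heA hFA) hA
  omega

lemma F_mono (k : ℕ) : F M k ⊆ F M (k+1) :=
  grow_chain M hV (fun x hx => Finset.mem_toList.1 hx) (Finset.Subset.refl _)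
    (Finset.empty_subset _) (by simp [hV.1]) (by simp [hV.1]) (Or.inl rfl)

lemma F_mono_le {k k' : ℕ} (h : k ≤ k') : F M k ⊆ F M k' := by
  induction k' with
  | zero => simpa [Nat.le_zero.1 h]
  | succ k' ih =>
    rcases Nat.lt_or_ge k (k'+1) with h' | h'
    · exact (ih (by omega)).trans (F_mono M hV k')
    · have : k = k' + 1 := by omega
      simp [this]

variable {n : ℕ} (hn : M.r M.E = n)
include hn

lemma rank_F {k : ℕ} (hk : k ≤ n) : M.r (F M k) = k := by
  refine le_antisymm (rank_F_le M hV k) ?_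
  by_cases hFE : F M k = M.E
  · rw [hFE, hn]; exact hk
  · obtain ⟨e, heE, heF⟩ := Finset.exists_of_ssubset
      ((F_subset_E M k).ssubset_of_ne hFE)
    have h1 : k < M.r (insert e (F M k)) := skip_F M hV heE heF
    have h2 : M.r (insert e (F M k)) ≤ M.r (F M k) + 1 :=
      r_insert_le M hV e (F_subset_E M k) heE
    omega

lemma F_n_eq_E : F M n = M.E := by
  refine le_antisymm (F_subset_E M n) (fun e heE => ?_)
  by_contra heF
  have h1 : n < M.r (insert e (F M n)) := skip_F M hV heE heF
  have h2 : M.r (insert e (F M n)) ≤ n := by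
    have := r_mono M hV (Finset.insert_subset heE (F_subset_E M n))
      (Finset.Subset.refl M.E)
    omega
  omega

end Matroid

section Layers

variable (M : FinMatroid α)

/-- The chain `∅ = FF 0 ⊆ F 1 ⊆ F 2 ⊆ …`. -/
noncomputable def FF (j : ℕ) : Finset α := if j = 0 then ∅ else F M j

variable (n : ℕ)

/-- The `j`-th layer of the chain. -/
noncomputable def Layer (j : Fin n) : Finset α := FF M ((j : ℕ) + 1) \ FF M (j : ℕ)

/-- The exponent vector of a subset `A`. -/
noncomputable def vec (A : Finset α) : Fin n →₀ ℕ :=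
  Finsupp.equivFunOnFinite.symm fun j => (A ∩ Layer M n j).card

lemma vec_apply (A : Finset α) (j : Fin n) : vec M n A j = (A ∩ Layer M n j).card := rfl

variable {M n}
variable (hV : M.Valid) (hn : M.r M.E = n)
include hV

lemma FF_mono {j j' : ℕ} (h : j ≤ j') : FF M j ⊆ FF M j' := by
  rcases Nat.eq_zero_or_pos j with rfl | hj
  · simp [FF]
  · have hj' : j' ≠ 0 := by omega
    simp only [FF, if_neg (by omega : j ≠ 0), if_neg hj']
    exact F_mono_le M hV h

include hn

lemma FF_rank {j : ℕ} (hj : j ≤ n) : M.r (FF M j) = j := by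
  rcases Nat.eq_zero_or_pos j with rfl | hjp
  · simp [FF, hV.1]
  · simp only [FF, if_neg (by omega : j ≠ 0)]
    exact rank_F M hV hn hj

lemma layer_nonempty (j : Fin n) : (Layer M n j).Nonempty := by
  rw [Layer, Finset.sdiff_nonempty]
  intro hsub
  have heq : FF M ((j : ℕ) + 1) = FF M (j : ℕ) :=
    le_antisymm hsub (FF_mono hV (Nat.le_succ _))
  have h1 := FF_rank hV hn (by omega : (j : ℕ) + 1 ≤ n)
  have h2 := FF_rank hV hn (by omega : (j : ℕ) ≤ n)
  rw [heq, h2] at h1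
  omega

omit hn in
lemma layer_subset_F {j : Fin n} {k : ℕ} (hjk : (j : ℕ) < k) :
    Layer M n j ⊆ F M k := by
  refine (Finset.sdiff_subset).trans ?_
  have := FF_mono hV (by omega : (j : ℕ) + 1 ≤ k)
  simpa [FF, if_neg (by omega : k ≠ 0)] using this

omit hn in
lemma F_inter_layer_eq {j : Fin n} {k : ℕ} (hjk : (j : ℕ) < k) :
    F M k ∩ Layer M n j = Layer M n j :=
  Finset.inter_eq_right.2 (layer_subset_F hV hjk)

omit hn in
lemma F_inter_layer_empty {j : Fin n} {k : ℕ} (hk : 1 ≤ k) (hjk : k ≤ (j : ℕ)) :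
    F M k ∩ Layer M n j = ∅ := by
  have hsub : F M k ⊆ FF M (j : ℕ) := by
    have := F_mono_le M hV hjk
    simpa [FF, if_neg (by omega : (j : ℕ) ≠ 0)] using this
  rw [Layer]
  rw [Finset.eq_empty_iff_forall_notMem]
  intro x hx
  simp only [Finset.mem_inter, Finset.mem_sdiff] at hx
  exact hx.2.2 (hsub hx.1)

omit hn in
lemma FF_subset_of_layers {k : ℕ} (hk : k ≤ n) {A : Finset α}
    (h : ∀ j : Fin n, (j : ℕ) < k → Layer M n j ⊆ A) : FF M k ⊆ A := by
  induction k with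
  | zero => simp [FF]
  | succ k ih =>
    have h1 : FF M k ⊆ A := ih (by omega) (fun j hj => h j (by omega))
    have h2 : Layer M n ⟨k, by omega⟩ ⊆ A := h _ (by exact Nat.lt_succ_self k)
    intro x hx
    by_cases hxk : x ∈ FF M k
    · exact h1 hxk
    · refine h2 ?_
      simp only [Layer, Finset.mem_sdiff]
      exact ⟨hx, hxk⟩

omit hn in
lemma F_subset_of_vec_prefix {k : ℕ} (hk1 : 1 ≤ k) (hkn : k ≤ n) {A : Finset α}
    (h : ∀ j : Fin n, (j : ℕ) < k → vec M n A j = vec M n (F M k) j) :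
    F M k ⊆ A := by
  have hFF : FF M k ⊆ A := by
    refine FF_subset_of_layers hV hkn (fun j hj => ?_)
    have h1 := h j hj
    rw [vec_apply, vec_apply, F_inter_layer_eq hV hj] at h1
    have hsub : A ∩ Layer M n j ⊆ Layer M n j := Finset.inter_subset_right
    have := Finset.eq_of_subset_of_card_le hsub (le_of_eq h1.symm)
    rw [← this]
    exact Finset.inter_subset_left
  simpa [FF, if_neg (by omega : k ≠ 0)] using hFF

/-- The key comparison: every rank-`k` subset other than `F M k` has strictly
smaller exponent vector in the lexicographic order. -/
lemma vec_lt_of_ne {k : ℕ} (hk1 : 1 ≤ k) (hkn : k ≤ n) {A : Finset α}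
    (hA : A ⊆ M.E) (hrA : M.r A = k) (hne : A ≠ F M k) :
    toLex (vec M n A) < toLex (vec M n (F M k)) := by
  have hrF : M.r (F M k) = k := rank_F M hV hn hkn
  have hveceq : vec M n A ≠ vec M n (F M k) := by
    intro h
    exact hne (F_max M hV hA hrA (F_subset_of_vec_prefix hV hk1 hkn
      (fun j _ => by rw [h])))
  rcases lt_or_gt_of_ne (fun h : toLex (vec M n A) = toLex (vec M n (F M k)) =>
    hveceq (toLex.injective h)) with h | h
  · exact h
  · exfalso
    rw [Finsupp.Lex.lt_iff] at h
    obtain ⟨j, hpre, hlt⟩ := h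
    simp only [ofLex_toLex] at hpre hlt
    rcases Nat.lt_or_ge (j : ℕ) k with hjk | hjk
    · -- impossible : vec (F M k) j is full
      rw [vec_apply, vec_apply, F_inter_layer_eq hV hjk] at hlt
      have : (A ∩ Layer M n j).card ≤ (Layer M n j).card :=
        Finset.card_le_card Finset.inter_subset_right
      omega
    · -- the prefix covers everything below k, so F M k ⊆ A, contradiction
      have hsub : F M k ⊆ A := by
        refine F_subset_of_vec_prefix hV hk1 hkn (fun j' hj' => ?_)
        exact (hpre j' (by exact Fin.lt_def.2 (by omega))).symm
      exact hne (F_max M hV hA hrA hsub)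

end Layers

section Criterion

open AddMonoidAlgebra

variable {K : Type} [Field K] {N : ℕ}

lemma toLex_addhom (a b : Fin N →₀ ℕ) :
    toLex (a + b) = toLex a + toLex b := rfl

lemma toLex_smulhom (m : ℕ) (a : Fin N →₀ ℕ) :
    toLex (m • a) = m • toLex a := rfl

lemma toLex_zerohom : toLex (0 : Fin N →₀ ℕ) = 0 := rfl

lemma prod_pow_monic (G : Fin N → MvPolynomial (Fin N) K) (μ : Fin N → (Fin N →₀ ℕ))
    (hmonic : ∀ i, Monic toLex (G i))
    (hdeg : ∀ i, supDegree toLex (G i) = toLex (μ i))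
    (s : Finset (Fin N)) (t : Fin N →₀ ℕ) :
    Monic toLex (∏ i ∈ s, G i ^ t i) ∧
      supDegree toLex (∏ i ∈ s, G i ^ t i) = toLex (∑ i ∈ s, t i • μ i) := by
  classical
  induction s using Finset.induction_on with
  | empty =>
    constructor
    · simpa using monic_one (R := K) (A := Fin N →₀ ℕ) toLex.injective
    · simp only [Finset.prod_empty, Finset.sum_empty, toLex_zerohom]
      rw [← MvPolynomial.C_1]
      exact supDegree_toLex_C 1
  | insert i s' hnotmem ih =>
    have hpow : Monic toLex (G i ^ t i) :=
      (hmonic i).pow toLex_addhom toLex.injective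
    constructor
    · rw [Finset.prod_insert hnotmem]
      exact hpow.mul toLex.injective toLex_addhom ih.1
    · rw [Finset.prod_insert hnotmem, Finset.sum_insert hnotmem,
        hpow.supDegree_mul toLex.injective toLex_addhom (by rfl) ih.1, ih.2,
        Monic.supDegree_pow rfl toLex_addhom toLex.injective (hmonic i), hdeg i,
        toLex_addhom, toLex_smulhom]

lemma algebraicIndependent_of_monic_supDegree
    (G : Fin N → MvPolynomial (Fin N) K) (μ : Fin N → (Fin N →₀ ℕ))
    (hmonic : ∀ i, Monic toLex (G i))
    (hdeg : ∀ i, supDegree toLex (G i) = toLex (μ i))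
    (hinj : Function.Injective fun t : Fin N →₀ ℕ => ∑ i, t i • μ i) :
    AlgebraicIndependent K G := by
  classical
  rw [algebraicIndependent_iff]
  intro p hp
  by_contra hne
  have key := prod_pow_monic G μ hmonic hdeg Finset.univ
  set f : (Fin N →₀ ℕ) → MvPolynomial (Fin N) K :=
    fun t => MvPolynomial.C (MvPolynomial.coeff t p) * ∏ i, G i ^ t i with hf
  have hsum : (MvPolynomial.aeval G) p = ∑ t ∈ p.support, f t := by
    conv_lhs => rw [p.as_sum]
    rw [map_sum]
    refine Finset.sum_congr rfl (fun t _ => ?_)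
    rw [MvPolynomial.aeval_monomial, MvPolynomial.algebraMap_eq,
      Finsupp.prod_fintype _ _ (fun i => pow_zero (G i))]
  have hC : ∀ t ∈ p.support, MvPolynomial.C (σ := Fin N) (MvPolynomial.coeff t p) ≠ 0 := by
    intro t ht
    rw [MvPolynomial.mem_support_iff] at ht
    simpa using ht
  have hlc : ∀ t ∈ p.support, leadingCoeff toLex (f t) = MvPolynomial.coeff t p := by
    intro t ht
    rw [hf]
    rw [(key t).1.leadingCoeff_mul_eq_left toLex.injective toLex_addhom]
    exact leadingCoeff_toLex_C _
  have hfne : ∀ t ∈ p.support, f t ≠ 0 := by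
    intro t ht h0
    have := hlc t ht
    rw [h0, AddMonoidAlgebra.leadingCoeff_zero] at this
    exact (MvPolynomial.mem_support_iff.1 ht) this.symm
  have hfdeg : ∀ t ∈ p.support, supDegree toLex (f t) = toLex (∑ i, t i • μ i) := by
    intro t ht
    rw [hf, (key t).1.supDegree_mul_of_ne_zero_left toLex.injective toLex_addhom (hC t ht),
      supDegree_toLex_C, (key t).2, zero_add]
  have hne0 : (∑ t ∈ p.support, f t) ≠ 0 := by
    refine sum_ne_zero_of_injOn_supDegree (D := toLex) ?_ hfne ?_
    · exact Finset.nonempty_iff_ne_empty.2 (fun h => hne (by simpa using MvPolynomial.support_eq_empty.1 (by simpa using h)))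
    · intro t ht t' ht' hdd
      simp only [Function.comp] at hdd
      rw [hfdeg t ht, hfdeg t' ht'] at hdd
      exact hinj (toLex.injective hdd)
  rw [hsum] at hp
  exact hne0 hp

end Criterion

section Assembly

variable {K : Type} [Field K]
variable (M : FinMatroid α) (n : ℕ)

/-- The substitution sending each variable to the `X j` of its layer. -/
noncomputable def sigmaSub (K : Type) [Field K] : α → MvPolynomial (Fin n) K :=
  fun e => ∏ j : Fin n, if e ∈ Layer M n j then MvPolynomial.X j else 1

lemma prod_sigmaSub (A : Finset α) :
    ∏ e ∈ A, sigmaSub M n K e = MvPolynomial.monomial (vec M n A) 1 := by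
  classical
  rw [← MvPolynomial.prod_X_pow_eq_monomial]
  rw [show ∏ x ∈ (vec M n A).support, (MvPolynomial.X x : MvPolynomial (Fin n) K) ^ vec M n A x
      = ∏ x : Fin n, (MvPolynomial.X x : MvPolynomial (Fin n) K) ^ vec M n A x from
    Finset.prod_subset (Finset.subset_univ _) (fun x _ hx => by
      rw [Finsupp.notMem_support_iff.1 hx, pow_zero])]
  simp only [sigmaSub]
  rw [Finset.prod_comm]
  refine Finset.prod_congr rfl (fun j _ => ?_)
  rw [← Finset.prod_filter_mul_prod_filter_not A (· ∈ Layer M n j)]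
  have h2 : ∏ e ∈ A.filter (fun e => ¬ e ∈ Layer M n j),
      (if e ∈ Layer M n j then (MvPolynomial.X j : MvPolynomial (Fin n) K) else 1) = 1 := by
    refine Finset.prod_eq_one (fun e he => ?_)
    rw [if_neg (Finset.mem_filter.1 he).2]
  have h1 : ∏ e ∈ A.filter (· ∈ Layer M n j),
      (if e ∈ Layer M n j then (MvPolynomial.X j : MvPolynomial (Fin n) K) else 1)
      = MvPolynomial.X j ^ (A ∩ Layer M n j).card := by
    rw [Finset.prod_congr rfl (fun e he => if_pos (Finset.mem_filter.1 he).2),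
      Finset.prod_const, Finset.filter_mem_eq_inter]
  rw [h1, h2, mul_one, vec_apply]

variable {M n}

lemma coeff_Zhat (hV : M.Valid) (hn : M.rank = n) (i : Fin n) :
    (M.Zhat K).coeff i =
      ∑ A ∈ M.E.powerset.filter (fun A => M.r A = n - (i : ℕ)),
        ∏ e ∈ A, (MvPolynomial.X e : MvPolynomial α K) := by
  classical
  rw [FinMatroid.Zhat, Polynomial.finset_sum_coeff]
  have hco : ∀ A ∈ M.E.powerset,
      (Polynomial.C (∏ e ∈ A, (MvPolynomial.X e : MvPolynomial α K)) *
        Polynomial.X ^ (M.rank - M.r A)).coeff i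
      = if M.r A = n - (i : ℕ) then ∏ e ∈ A, (MvPolynomial.X e : MvPolynomial α K) else 0 := by
    intro A hA
    rw [Polynomial.coeff_C_mul, Polynomial.coeff_X_pow]
    have hrA : M.r A ≤ n := by
      rw [← hn]
      exact r_mono M hV (Finset.mem_powerset.1 hA) (Finset.Subset.refl _)
    have hiff : ((i : ℕ) = M.rank - M.r A) ↔ (M.r A = n - (i : ℕ)) := by
      rw [hn]
      have hi : (i : ℕ) < n := i.2
      omega
    by_cases hcond : M.r A = n - (i : ℕ)
    · rw [if_pos (hiff.2 hcond), if_pos hcond, mul_one]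
    · rw [if_neg (fun h => hcond (hiff.1 h)), if_neg hcond, mul_zero]
  rw [Finset.sum_congr rfl hco]
  exact (Finset.sum_filter _ _).symm


/-- The leading exponent vectors. -/
noncomputable def mu (M' : FinMatroid α) (n' : ℕ) (i : Fin n') : Fin n' →₀ ℕ :=
  vec M' n' (F M' (n' - (i : ℕ)))

lemma mu_apply (hV : M.Valid) (hn : M.r M.E = n) (i j : Fin n) :
    mu M n i j = if (j : ℕ) < n - (i : ℕ) then (Layer M n j).card else 0 := by
  have hk1 : 1 ≤ n - (i : ℕ) := by have := i.2; omega
  rw [mu, vec_apply]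
  by_cases hj : (j : ℕ) < n - (i : ℕ)
  · rw [if_pos hj, F_inter_layer_eq hV hj]
  · rw [if_neg hj, F_inter_layer_empty hV hk1 (by omega), Finset.card_empty]

lemma mu_inj (hV : M.Valid) (hn : M.r M.E = n) :
    Function.Injective fun t : Fin n →₀ ℕ => ∑ i, t i • mu M n i := by
  intro t s h
  have hw : ∀ j : Fin n, 0 < (Layer M n j).card :=
    fun j => Finset.card_pos.2 (layer_nonempty hV hn j)
  have hT : ∀ j : Fin n,
      ∑ i ∈ Finset.univ.filter (fun i : Fin n => (i : ℕ) < n - (j : ℕ)), t i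
      = ∑ i ∈ Finset.univ.filter (fun i : Fin n => (i : ℕ) < n - (j : ℕ)), s i := by
    intro j
    have hj := congrArg (fun v : Fin n →₀ ℕ => v j) h
    simp only [Finset.sum_apply', Finsupp.smul_apply, smul_eq_mul,
      mu_apply hV hn, mul_ite, mul_zero] at hj
    rw [Finset.sum_ite, Finset.sum_const_zero, add_zero,
      Finset.sum_ite, Finset.sum_const_zero, add_zero, ← Finset.sum_mul,
      ← Finset.sum_mul] at hj
    have hfil : Finset.univ.filter (fun i : Fin n => (j : ℕ) < n - (i : ℕ))
        = Finset.univ.filter (fun i : Fin n => (i : ℕ) < n - (j : ℕ)) := by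
      refine Finset.filter_congr (fun i _ => ?_)
      have := i.2; have := j.2
      constructor <;> intro <;> omega
    rw [hfil] at hj
    exact Nat.eq_of_mul_eq_mul_right (hw j) hj
  have hP : ∀ m : ℕ, m ≤ n →
      ∑ i ∈ Finset.univ.filter (fun i : Fin n => (i : ℕ) < m), t i
      = ∑ i ∈ Finset.univ.filter (fun i : Fin n => (i : ℕ) < m), s i := by
    intro m hm
    rcases Nat.eq_zero_or_pos m with rfl | hm1
    · simp
    · have hT' := hT ⟨n - m, by omega⟩
      simpa [Nat.sub_sub_self hm] using hT'
  ext i0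
  have h1 := hP (i0 : ℕ) (le_of_lt i0.2)
  have h2 := hP ((i0 : ℕ) + 1) i0.2
  have hsplit : ∀ u : Fin n →₀ ℕ,
      ∑ i ∈ Finset.univ.filter (fun i : Fin n => (i : ℕ) < (i0 : ℕ) + 1), u i
      = u i0 + ∑ i ∈ Finset.univ.filter (fun i : Fin n => (i : ℕ) < (i0 : ℕ)), u i := by
    intro u
    have hins : Finset.univ.filter (fun i : Fin n => (i : ℕ) < (i0 : ℕ) + 1)
        = insert i0 (Finset.univ.filter (fun i : Fin n => (i : ℕ) < (i0 : ℕ))) := by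
      ext x
      simp only [Finset.mem_filter, Finset.mem_univ, true_and, Finset.mem_insert,
        Fin.ext_iff]
      omega
    rw [hins, Finset.sum_insert (by simp)]
  rw [hsplit t, hsplit s, h1] at h2
  omega

open AddMonoidAlgebra in
lemma supDegree_monomial_one (d : Fin n →₀ ℕ) :
    supDegree toLex (MvPolynomial.monomial d (1 : K)) = toLex d := by
  rw [← MvPolynomial.single_eq_monomial]
  exact supDegree_single_ne_zero _ one_ne_zero

open AddMonoidAlgebra in
lemma G_monic_supDegree (hV : M.Valid) (hn : M.r M.E = n) (i : Fin n)
    (Gi : MvPolynomial (Fin n) K)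
    (hGi : Gi = ∑ A ∈ M.E.powerset.filter (fun A => M.r A = n - (i : ℕ)),
        MvPolynomial.monomial (vec M n A) (1 : K)) :
    Monic toLex Gi ∧ supDegree toLex Gi = toLex (mu M n i) := by
  classical
  have hk1 : 1 ≤ n - (i : ℕ) := by have := i.2; omega
  have hkn : n - (i : ℕ) ≤ n := by omega
  have hFk : F M (n - (i : ℕ)) ∈
      M.E.powerset.filter (fun A => M.r A = n - (i : ℕ)) := by
    rw [Finset.mem_filter, Finset.mem_powerset]
    exact ⟨F_subset_E M _, rank_F M hV hn hkn⟩
  have hmax : ∀ A ∈ M.E.powerset.filter (fun A => M.r A = n - (i : ℕ)),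
      A ≠ F M (n - (i : ℕ)) →
      supDegree toLex (MvPolynomial.monomial (vec M n A) (1 : K)) <
        supDegree toLex (MvPolynomial.monomial (vec M n (F M (n - (i : ℕ)))) (1 : K)) := by
    intro A hA hne
    rw [supDegree_monomial_one, supDegree_monomial_one]
    rw [Finset.mem_filter, Finset.mem_powerset] at hA
    exact vec_lt_of_ne hV hn hk1 hkn hA.1 hA.2 hne
  have hsum := supDegree_leadingCoeff_sum_eq (D := toLex)
    (f := fun A => MvPolynomial.monomial (vec M n A) (1 : K)) hFk hmax
  constructor
  · rw [AddMonoidAlgebra.Monic, hGi, hsum.2, ← MvPolynomial.single_eq_monomial,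
      leadingCoeff_single toLex.injective]
  · rw [hGi, hsum.1, supDegree_monomial_one, mu]

end Assembly

end Stmt12Aux

/-- for a connected matroid of positive rank `n`, the non-leading
coefficients `a_0, …, a_{n-1}` of `Ẑ_M = q^n + a_{n-1} q^{n-1} + ⋯ + a_0` are
algebraically independent over `K`. -/
theorem stmt_12 {α : Type} [DecidableEq α] (M : FinMatroid α) (hV : M.Valid)
    (hC : M.Connected) (n : ℕ) (hn : M.rank = n) (hpos : 0 < n)
    (K : Type) [Field K] :
    AlgebraicIndependent K (fun i : Fin n => (M.Zhat K).coeff i) := by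
  classical
  have hn' : M.r M.E = n := hn
  refine AlgebraicIndependent.of_comp
    (MvPolynomial.aeval (Stmt12Aux.sigmaSub M n K)) ?_
  have hGdef : (⇑(MvPolynomial.aeval (Stmt12Aux.sigmaSub M n K)) ∘
      fun i : Fin n => (M.Zhat K).coeff i)
      = fun i : Fin n => ∑ A ∈ M.E.powerset.filter (fun A => M.r A = n - (i : ℕ)),
          MvPolynomial.monomial (Stmt12Aux.vec M n A) (1 : K) := by
    funext i
    simp only [Function.comp]
    rw [Stmt12Aux.coeff_Zhat hV hn, map_sum]
    refine Finset.sum_congr rfl (fun A _ => ?_)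
    rw [map_prod]
    simp only [MvPolynomial.aeval_X]
    exact Stmt12Aux.prod_sigmaSub M n A
  rw [hGdef]
  refine Stmt12Aux.algebraicIndependent_of_monic_supDegree _ (Stmt12Aux.mu M n)
    (fun i => (Stmt12Aux.G_monic_supDegree hV hn' i _ rfl).1)
    (fun i => (Stmt12Aux.G_monic_supDegree hV hn' i _ rfl).2)
    (Stmt12Aux.mu_inj hV hn')
end
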